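/- Let n, p ∈ ℕ with n ≥ 1, let L > 0, and let g : ℝⁿ × ℝᵖ → ℝⁿ satisfy ‖g(x,u) − g(y,u)‖ ≤ L‖x − y‖ for all x, y, u; define F(e,u) = e + g(e,u). Let P and Q* be real symmetric positive-definite n×n matrices with ‖x‖_P = √(xᵀPx), let λ denote the largest eigenvalue of the positive-definite square root √P, let λ_min(Q*) be the smallest eigenvalue of Q* and λ_max(P) the largest eigenvalue of P, and assume λ_min(Q*) ≤ λ_max(P). Let κ : ℝⁿ → ℝᵖ be a feedback such that for every e with ‖e‖_P ≤ ε_r, ‖F(e, κ(e))‖²_P ≤ ‖e‖²_P − eᵀQ*e. Let 0 < ε < ε_r, N, m ∈ ℕ with 1 ≤ m ≤ N, and η ≥ 0 with η ≤ L(ε_r − ε)/(λ·((1+L)^N − 1)). Assume further Υ(m) ≤ 0, where Υ(m) = (1 − λ_min(Q*)/λ_max(P))^m · [ε + (η λ / L)·((1+L)^N − (1+L)^{N−m})]² − ε². Let (u_τ)_{τ=0}^{N−1} be inputs, let (ẽ_τ)_{τ=0}^{N} satisfy ẽ_{τ+1} = F(ẽ_τ, u_τ) with ‖ẽ_N‖_P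 ≤ ε, let e_0 = ẽ_0 and e_{k+1} = F(e_k, u_k) + d_k with ‖d_k‖ ≤ η for k = 0, …, m−1, and define the candidate trajectory ē_0 = e_m, ē_{τ+1} = F(ē_τ, u_{τ+m}) for 0 ≤ τ ≤ N−m−1, and ē_{τ+1} = F(ē_τ, κ(ē_τ)) for N−m ≤ τ ≤ N−1. Then ‖ē_N‖²_P ≤ ε². -/

import Mathlib

open Matrix


private lemma starU' {n : ℕ} (U : Matrix (Fin n) (Fin n) ℝ) : star U = Uᵀ := by
  simp [Matrix.star_eq_conjTranspose, Matrix.conjTranspose]; ext i j; simp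

private lemma quadSum' {n : ℕ} (U : Matrix (Fin n) (Fin n) ℝ)
    (μ x : Fin n → ℝ) :
    x ⬝ᵥ (U * Matrix.diagonal μ * star U).mulVec x
      = ∑ i, μ i * ((star U).mulVec x i)^2 := by
  rw [← mulVec_mulVec, ← mulVec_mulVec, dotProduct_mulVec]
  have : x ᵥ* U = (star U).mulVec x := by
    rw [starU', ← vecMul_transpose]; simp
  rw [this, dotProduct, starU']
  refine Finset.sum_congr rfl fun i _ => ?_
  rw [mulVec_diagonal]; ring

private lemma normSum' {n : ℕ} (U : Matrix (Fin n) (Fin n) ℝ)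
    (hU : U ∈ Matrix.unitaryGroup (Fin n) ℝ) (x : Fin n → ℝ) :
    ((star U).mulVec x) ⬝ᵥ ((star U).mulVec x) = x ⬝ᵥ x := by
  rw [dotProduct_mulVec, starU', ← vecMul_transpose]
  simp only [transpose_transpose, vecMul_vecMul]
  have h1 : U * Uᵀ = 1 := by
    have := (Matrix.mem_unitaryGroup_iff).mp hU
    rwa [starU'] at this
  rw [h1]; simp

private lemma ofRealComp' {n : ℕ} (f : Fin n → ℝ) :
    (RCLike.ofReal ∘ f : Fin n → ℝ) = f := by
  funext i; simp

private lemma quad_upper' {n : ℕ} (hn : 1 ≤ n) {A : Matrix (Fin n) (Fin n) ℝ}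
    (hA : A.IsHermitian) (x : Fin n → ℝ) :
    x ⬝ᵥ A.mulVec x ≤ (⨆ i, hA.eigenvalues i) * (x ⬝ᵥ x) := by
  haveI : Nonempty (Fin n) := ⟨⟨0, hn⟩⟩
  have hbd : BddAbove (Set.range hA.eigenvalues) := (Set.finite_range _).bddAbove
  conv_lhs => rw [hA.spectral_theorem, ofRealComp', Unitary.conjStarAlgAut_apply]
  rw [quadSum', ← normSum' (hA.eigenvectorUnitary : Matrix _ _ ℝ) (hA.eigenvectorUnitary).2 x,
    dotProduct, Finset.mul_sum]
  refine Finset.sum_le_sum fun i _ => ?_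
  have h1 : hA.eigenvalues i ≤ ⨆ j, hA.eigenvalues j := le_ciSup hbd i
  nlinarith [sq_nonneg ((star (hA.eigenvectorUnitary : Matrix _ _ ℝ)).mulVec x i)]

private lemma quad_lower' {n : ℕ} (hn : 1 ≤ n) {A : Matrix (Fin n) (Fin n) ℝ}
    (hA : A.IsHermitian) (x : Fin n → ℝ) :
    (⨅ i, hA.eigenvalues i) * (x ⬝ᵥ x) ≤ x ⬝ᵥ A.mulVec x := by
  haveI : Nonempty (Fin n) := ⟨⟨0, hn⟩⟩
  have hbd : BddBelow (Set.range hA.eigenvalues) := (Set.finite_range _).bddBelow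
  conv_rhs => rw [hA.spectral_theorem, ofRealComp', Unitary.conjStarAlgAut_apply]
  rw [quadSum', ← normSum' (hA.eigenvectorUnitary : Matrix _ _ ℝ) (hA.eigenvectorUnitary).2 x,
    dotProduct, Finset.mul_sum]
  refine Finset.sum_le_sum fun i _ => ?_
  have h1 : (⨅ j, hA.eigenvalues j) ≤ hA.eigenvalues i := ciInf_le hbd i
  nlinarith [sq_nonneg ((star (hA.eigenvectorUnitary : Matrix _ _ ℝ)).mulVec x i)]

private lemma quad_sq_upper' {n : ℕ} (hn : 1 ≤ n) {A : Matrix (Fin n) (Fin n) ℝ}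
    (hA : A.IsHermitian) (c : ℝ) (hc : ∀ i, hA.eigenvalues i ≤ c)
    (hpos : ∀ i, 0 ≤ hA.eigenvalues i) (x : Fin n → ℝ) :
    x ⬝ᵥ (A * A).mulVec x ≤ c^2 * (x ⬝ᵥ x) := by
  haveI : Nonempty (Fin n) := ⟨⟨0, hn⟩⟩
  set U : Matrix (Fin n) (Fin n) ℝ := (↑hA.eigenvectorUnitary : Matrix (Fin n) (Fin n) ℝ) with hUdef
  have hUU : star U * U = 1 := by
    exact (Matrix.mem_unitaryGroup_iff').mp (hA.eigenvectorUnitary).2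
  have hAA : A * A = U * Matrix.diagonal (fun i => hA.eigenvalues i ^ 2) * star U := by
    conv_lhs => rw [hA.spectral_theorem, ofRealComp', Unitary.conjStarAlgAut_apply]
    rw [show (U * Matrix.diagonal hA.eigenvalues * star U) *
        (U * Matrix.diagonal hA.eigenvalues * star U)
        = U * (Matrix.diagonal hA.eigenvalues * (star U * U) * Matrix.diagonal hA.eigenvalues) * star U by
      simp only [mul_assoc]]
    rw [hUU, mul_one, diagonal_mul_diagonal]
    congr 1
    · congr 1; funext i; ring
  rw [hAA, quadSum', ← normSum' U (hA.eigenvectorUnitary).2 x, dotProduct, Finset.mul_sum]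
  refine Finset.sum_le_sum fun i _ => ?_
  have hsq : hA.eigenvalues i ^ 2 ≤ c ^ 2 := pow_le_pow_left₀ (hpos i) (hc i) 2
  have hy : (star U).mulVec x i * (star U).mulVec x i = ((star U).mulVec x i) ^ 2 := (sq _).symm
  rw [hy]
  exact mul_le_mul_of_nonneg_right hsq (sq_nonneg _)

private lemma dot_self_eq_norm' {n : ℕ} (v : EuclideanSpace ℝ (Fin n)) :
    (v : Fin n → ℝ) ⬝ᵥ (v : Fin n → ℝ) = ‖v‖ ^ 2 := by
  rw [EuclideanSpace.norm_eq, Real.sq_sqrt (by positivity)]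
  simp [dotProduct, sq, Real.norm_eq_abs, abs_mul_abs_self]

private lemma quad_via_sqrt' {n : ℕ} {P sqrtP : Matrix (Fin n) (Fin n) ℝ}
    (hsym : sqrtPᵀ = sqrtP) (hsq : sqrtP * sqrtP = P) (y z : Fin n → ℝ) :
    y ⬝ᵥ P.mulVec z = (sqrtP.mulVec y) ⬝ᵥ (sqrtP.mulVec z) := by
  rw [← hsq, ← mulVec_mulVec, dotProduct_mulVec]
  congr 1
  conv_lhs => rw [← hsym, vecMul_transpose]

private lemma sqrt_quad_eq_norm' {n : ℕ} {P sqrtP : Matrix (Fin n) (Fin n) ℝ}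
    (hsym : sqrtPᵀ = sqrtP) (hsq : sqrtP * sqrtP = P) (v : EuclideanSpace ℝ (Fin n)) :
    Real.sqrt (v ⬝ᵥ P.mulVec v)
      = ‖((WithLp.equiv 2 (Fin n → ℝ)).symm (sqrtP.mulVec v) : EuclideanSpace ℝ (Fin n))‖ := by
  rw [quad_via_sqrt' hsym hsq,
    show (sqrtP.mulVec v ⬝ᵥ sqrtP.mulVec v : ℝ)
      = ‖((WithLp.equiv 2 (Fin n → ℝ)).symm (sqrtP.mulVec v) : EuclideanSpace ℝ (Fin n))‖ ^ 2
      from dot_self_eq_norm' ((WithLp.equiv 2 (Fin n → ℝ)).symm (sqrtP.mulVec v)),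
    Real.sqrt_sq (norm_nonneg _)]

private lemma quad_eq_norm_sq' {n : ℕ} {P sqrtP : Matrix (Fin n) (Fin n) ℝ}
    (hsym : sqrtPᵀ = sqrtP) (hsq : sqrtP * sqrtP = P) (v : EuclideanSpace ℝ (Fin n)) :
    v ⬝ᵥ P.mulVec v
      = ‖((WithLp.equiv 2 (Fin n → ℝ)).symm (sqrtP.mulVec v) : EuclideanSpace ℝ (Fin n))‖ ^ 2 := by
  rw [quad_via_sqrt' hsym hsq]
  exact dot_self_eq_norm' ((WithLp.equiv 2 (Fin n → ℝ)).symm (sqrtP.mulVec v))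

private lemma quad_triangle' {n : ℕ} {P sqrtP : Matrix (Fin n) (Fin n) ℝ}
    (hsym : sqrtPᵀ = sqrtP) (hsq : sqrtP * sqrtP = P) (x y : EuclideanSpace ℝ (Fin n)) :
    Real.sqrt ((x + y : EuclideanSpace ℝ (Fin n)) ⬝ᵥ P.mulVec (x + y))
      ≤ Real.sqrt (x ⬝ᵥ P.mulVec x) + Real.sqrt (y ⬝ᵥ P.mulVec y) := by
  rw [← WithLp.ofLp_add (x := x) (y := y), sqrt_quad_eq_norm' hsym hsq, sqrt_quad_eq_norm' hsym hsq, sqrt_quad_eq_norm' hsym hsq]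
  have hadd : ((WithLp.equiv 2 (Fin n → ℝ)).symm (sqrtP.mulVec (x + y)) : EuclideanSpace ℝ (Fin n))
      = (WithLp.equiv 2 (Fin n → ℝ)).symm (sqrtP.mulVec x)
        + (WithLp.equiv 2 (Fin n → ℝ)).symm (sqrtP.mulVec y) := by
    rw [mulVec_add]; rfl
  rw [WithLp.ofLp_add, hadd]
  exact norm_add_le _ _

private lemma conjT_eq_transpose' {n : ℕ} (A : Matrix (Fin n) (Fin n) ℝ) : Aᴴ = Aᵀ := by
  ext i j; simp [Matrix.conjTranspose_apply]

private lemma ciInf_pos' {n : ℕ} (hn : 1 ≤ n) (f : Fin n → ℝ) (hf : ∀ i, 0 < f i) :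
    0 < ⨅ i, f i := by
  haveI : Nonempty (Fin n) := ⟨⟨0, hn⟩⟩
  have h1 : sInf (Set.range f) ∈ Set.range f :=
    (Set.range_nonempty f).csInf_mem (Set.finite_range f)
  obtain ⟨i, hi⟩ := h1
  rw [iInf, ← hi]
  exact hf i

set_option maxHeartbeats 1000000 in
/-- Lemma 1 of the paper: under the admissible disturbance bound
and the condition `Υ(m) ≤ 0`, the candidate trajectory (shift of the previous
optimal control sequence followed by `m` steps of the local feedback `κ`)
satisfies the terminal constraint `‖ē_N‖²_P ≤ ε²`. -/
theorem stmt_11 (n p : ℕ) (hn : 1 ≤ n) (L : ℝ) (hL : 0 < L)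
    (g : EuclideanSpace ℝ (Fin n) → EuclideanSpace ℝ (Fin p) → EuclideanSpace ℝ (Fin n))
    (hg : ∀ x y : EuclideanSpace ℝ (Fin n), ∀ u : EuclideanSpace ℝ (Fin p),
      ‖g x u - g y u‖ ≤ L * ‖x - y‖)
    (P Qstar sqrtP : Matrix (Fin n) (Fin n) ℝ) (hP : P.PosDef) (hQstar : Qstar.PosDef)
    (hsqrtP : sqrtP.PosDef) (hsq : sqrtP * sqrtP = P)
    (lam lamMinQ lamMaxP : ℝ)
    (hlam : lam = ⨆ i, hsqrtP.1.eigenvalues i)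
    (hlamMinQ : lamMinQ = ⨅ i, hQstar.1.eigenvalues i)
    (hlamMaxP : lamMaxP = ⨆ i, hP.1.eigenvalues i)
    (hQP : lamMinQ ≤ lamMaxP)
    (κ : EuclideanSpace ℝ (Fin n) → EuclideanSpace ℝ (Fin p))
    (ε εr : ℝ) (hε : 0 < ε) (hεεr : ε < εr)
    (hκ : ∀ e : EuclideanSpace ℝ (Fin n), Real.sqrt (e ⬝ᵥ P.mulVec e) ≤ εr →
      (e + g e (κ e)) ⬝ᵥ P.mulVec (e + g e (κ e)) ≤
        e ⬝ᵥ P.mulVec e - e ⬝ᵥ Qstar.mulVec e)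
    (N m : ℕ) (hm1 : 1 ≤ m) (hmN : m ≤ N)
    (η : ℝ) (hη0 : 0 ≤ η) (hη : η ≤ L * (εr - ε) / (lam * ((1 + L) ^ N - 1)))
    (hΥ : (1 - lamMinQ / lamMaxP) ^ m *
        (ε + η * lam / L * ((1 + L) ^ N - (1 + L) ^ (N - m))) ^ 2 - ε ^ 2 ≤ 0)
    (u : ℕ → EuclideanSpace ℝ (Fin p))
    (etil e ebar : ℕ → EuclideanSpace ℝ (Fin n))
    (d : ℕ → EuclideanSpace ℝ (Fin n))
    (hetil : ∀ τ < N, etil (τ + 1) = etil τ + g (etil τ) (u τ))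
    (hterm : Real.sqrt (etil N ⬝ᵥ P.mulVec (etil N)) ≤ ε)
    (he0 : e 0 = etil 0)
    (he : ∀ k < m, e (k + 1) = e k + g (e k) (u k) + d k)
    (hd : ∀ k < m, ‖d k‖ ≤ η)
    (hebar0 : ebar 0 = e m)
    (hebar₁ : ∀ τ < N - m, ebar (τ + 1) = ebar τ + g (ebar τ) (u (τ + m)))
    (hebar₂ : ∀ τ, N - m ≤ τ → τ < N →
      ebar (τ + 1) = ebar τ + g (ebar τ) (κ (ebar τ))) :
    ebar N ⬝ᵥ P.mulVec (ebar N) ≤ ε ^ 2 := by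
  haveI : Nonempty (Fin n) := ⟨⟨0, hn⟩⟩
  have i0 : Fin n := ⟨0, hn⟩
  have hsym : sqrtPᵀ = sqrtP := by rw [← conjT_eq_transpose']; exact hsqrtP.1
  have hL1 : (1:ℝ) ≤ 1 + L := by linarith
  have hL1pos : (0:ℝ) < 1 + L := by linarith
  have hLne : L ≠ 0 := ne_of_gt hL
  -- positivity of spectral quantities
  have hbdS : BddAbove (Set.range hsqrtP.1.eigenvalues) := (Set.finite_range _).bddAbove
  have hlam_pos : 0 < lam := by
    rw [hlam]
    exact lt_of_lt_of_le (hsqrtP.eigenvalues_pos i0) (le_ciSup hbdS i0)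
  have hlamMaxP_pos : 0 < lamMaxP := by
    rw [hlamMaxP]
    exact lt_of_lt_of_le (hP.eigenvalues_pos i0)
      (le_ciSup ((Set.finite_range _).bddAbove) i0)
  have hlamMinQ_pos : 0 < lamMinQ := by
    rw [hlamMinQ]; exact ciInf_pos' hn _ (hQstar.eigenvalues_pos)
  -- nonnegativity of quadratic forms
  have hquad_nn : ∀ v : EuclideanSpace ℝ (Fin n), 0 ≤ v ⬝ᵥ P.mulVec v := by
    intro v; rw [quad_eq_norm_sq' hsym hsq]; positivity
  have hdot_nn : ∀ v : EuclideanSpace ℝ (Fin n), 0 ≤ (v : Fin n → ℝ) ⬝ᵥ (v : Fin n → ℝ) := by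
    intro v; rw [dot_self_eq_norm']; positivity
  -- Step 1: disturbed trajectory deviation
  have step1 : ∀ k, k ≤ m → ‖e k - etil k‖ ≤ η * ((1+L)^k - 1)/L := by
    intro k
    induction k with
    | zero => intro _; simp [he0]
    | succ k ih =>
      intro hk
      have hkm : k < m := Nat.lt_of_succ_le hk
      have hkN : k < N := lt_of_lt_of_le hkm hmN
      have h1 := ih hkm.le
      have hdk := hd k hkm
      have hgk := hg (e k) (etil k) (u k)
      rw [he k hkm, hetil k hkN]
      have hdiff : e k + g (e k) (u k) + d k - (etil k + g (etil k) (u k))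
          = (e k - etil k) + (g (e k) (u k) - g (etil k) (u k)) + d k := by abel
      rw [hdiff]
      have htr : ‖(e k - etil k) + (g (e k) (u k) - g (etil k) (u k)) + d k‖
          ≤ ‖e k - etil k‖ + ‖g (e k) (u k) - g (etil k) (u k)‖ + ‖d k‖ :=
        norm_add₃_le
      have hkey : η*((1+L)^(k+1) - 1)/L = (1+L)*(η*((1+L)^k - 1)/L) + η := by
        field_simp; ring
      rw [hkey]
      have hnn : 0 ≤ ‖e k - etil k‖ := norm_nonneg _
      nlinarith
  -- Step 2: candidate trajectory deviation while following shifted inputs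
  have step2 : ∀ τ, τ ≤ N - m →
      ‖ebar τ - etil (τ + m)‖ ≤ (1+L)^τ * (η*((1+L)^m - 1)/L) := by
    intro τ
    induction τ with
    | zero =>
      intro _
      simpa [hebar0] using step1 m le_rfl
    | succ τ ih =>
      intro hτ
      have hτ' : τ < N - m := Nat.lt_of_succ_le hτ
      have hτm : τ + m < N := by omega
      have h1 := ih hτ'.le
      have hgk := hg (ebar τ) (etil (τ + m)) (u (τ + m))
      have hidx : τ + 1 + m = (τ + m) + 1 := by omega
      rw [hidx, hebar₁ τ hτ', hetil (τ + m) hτm]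
      have hdiff : ebar τ + g (ebar τ) (u (τ + m)) - (etil (τ+m) + g (etil (τ+m)) (u (τ+m)))
          = (ebar τ - etil (τ+m)) + (g (ebar τ) (u (τ+m)) - g (etil (τ+m)) (u (τ+m))) := by abel
      rw [hdiff]
      have htr := norm_add_le (ebar τ - etil (τ+m))
        (g (ebar τ) (u (τ+m)) - g (etil (τ+m)) (u (τ+m)))
      have hpowpos : (0:ℝ) ≤ (1+L)^τ := by positivity
      have hkey : (1+L)^(τ+1) * (η*((1+L)^m - 1)/L)
          = (1+L) * ((1+L)^τ * (η*((1+L)^m - 1)/L)) := by ring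
      rw [hkey]
      have hnn : 0 ≤ ‖ebar τ - etil (τ+m)‖ := norm_nonneg _
      nlinarith
  -- deviation at τ = N - m
  have hNm : N - m + m = N := Nat.sub_add_cancel hmN
  have hpowNm : (1+L)^(N-m) * (1+L)^m = (1+L)^N := by rw [← pow_add, hNm]
  have hdiffN : ‖ebar (N-m) - etil N‖ ≤ η * ((1+L)^N - (1+L)^(N-m))/L := by
    have h1 := step2 (N-m) le_rfl
    rw [hNm] at h1
    have heq : (1+L)^(N-m) * (η*((1+L)^m - 1)/L) = η * ((1+L)^N - (1+L)^(N-m))/L := by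
      rw [← hpowNm]; field_simp
    rwa [heq] at h1
  -- bound on P-seminorm of ebar (N-m)
  set ρ : ℝ := ε + η * lam / L * ((1 + L) ^ N - (1 + L) ^ (N - m)) with hρdef
  have hXY : (1+L)^(N-m) ≤ (1+L)^N := pow_le_pow_right₀ hL1 (Nat.sub_le N m)
  have hY1 : (1:ℝ) ≤ (1+L)^(N-m) := one_le_pow₀ hL1
  have hρ0 : 0 ≤ ρ := by
    have : 0 ≤ η * lam / L * ((1 + L) ^ N - (1 + L) ^ (N - m)) := by
      apply mul_nonneg (by positivity) (by linarith)
    rw [hρdef]; linarith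
  have hΦdiff : Real.sqrt ((ebar (N-m) - etil N) ⬝ᵥ P.mulVec (ebar (N-m) - etil N))
      ≤ lam * ‖ebar (N-m) - etil N‖ := by
    have hq : (ebar (N-m) - etil N) ⬝ᵥ P.mulVec (ebar (N-m) - etil N)
        ≤ lam^2 * ((ebar (N-m) - etil N : EuclideanSpace ℝ (Fin n)) ⬝ᵥ (ebar (N-m) - etil N : EuclideanSpace ℝ (Fin n))) := by
      rw [← hsq]
      refine quad_sq_upper' hn hsqrtP.1 lam ?_ (fun i => (hsqrtP.eigenvalues_pos i).le) _
      intro i; rw [hlam]; exact le_ciSup hbdS i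
    rw [dot_self_eq_norm'] at hq
    have h2 : (ebar (N-m) - etil N) ⬝ᵥ P.mulVec (ebar (N-m) - etil N)
        ≤ (lam * ‖ebar (N-m) - etil N‖)^2 := by nlinarith
    calc Real.sqrt ((ebar (N-m) - etil N) ⬝ᵥ P.mulVec (ebar (N-m) - etil N))
        ≤ Real.sqrt ((lam * ‖ebar (N-m) - etil N‖)^2) := Real.sqrt_le_sqrt h2
      _ = lam * ‖ebar (N-m) - etil N‖ := Real.sqrt_sq (by positivity)
  have hΦbar : Real.sqrt (ebar (N-m) ⬝ᵥ P.mulVec (ebar (N-m))) ≤ ρ := by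
    have hsplit : ebar (N-m) = etil N + (ebar (N-m) - etil N) := by abel
    have htri := quad_triangle' hsym hsq (etil N) (ebar (N-m) - etil N)
    rw [← WithLp.ofLp_add (x := etil N) (y := ebar (N-m) - etil N), ← hsplit] at htri
    have h2 : lam * ‖ebar (N-m) - etil N‖ ≤ lam * (η * ((1+L)^N - (1+L)^(N-m))/L) :=
      mul_le_mul_of_nonneg_left hdiffN hlam_pos.le
    have heq : lam * (η * ((1+L)^N - (1+L)^(N-m))/L)
        = η * lam / L * ((1 + L) ^ N - (1 + L) ^ (N - m)) := by ring
    rw [heq] at h2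
    rw [hρdef]
    simp only [WithLp.ofLp_sub] at htri hΦdiff
    linarith [htri, hterm, hΦdiff.trans h2]
  have hρεr : ρ ≤ εr := by
    have hD : 0 < lam * ((1 + L) ^ N - 1) := by
      have : (1:ℝ) < (1+L)^N := by
        have hN1 : 1 ≤ N := le_trans hm1 hmN
        calc (1:ℝ) < 1 + L := by linarith
          _ = (1+L)^1 := (pow_one _).symm
          _ ≤ (1+L)^N := pow_le_pow_right₀ hL1 hN1
      have := hlam_pos
      nlinarith
    have h2 : η * (lam * ((1 + L) ^ N - 1)) ≤ L * (εr - ε) := (le_div_iff₀ hD).mp hη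
    have h1 : η * lam * ((1+L)^N - (1+L)^(N-m)) ≤ η * lam * ((1+L)^N - 1) := by
      apply mul_le_mul_of_nonneg_left (by linarith) (by positivity)
    have e1 : η * lam / L * ((1+L)^N - (1+L)^(N-m))
        = η * lam * ((1+L)^N - (1+L)^(N-m)) / L := by ring
    have h3 : η * lam * ((1+L)^N - (1+L)^(N-m)) / L ≤ εr - ε := by
      rw [div_le_iff₀ hL]
      calc η * lam * ((1+L)^N - (1+L)^(N-m)) ≤ η * (lam * ((1 + L) ^ N - 1)) := by linarith
        _ ≤ L * (εr - ε) := h2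
        _ = (εr - ε) * L := by ring
    rw [hρdef, e1]; linarith
  -- Step 4: terminal feedback contraction
  set c : ℝ := 1 - lamMinQ / lamMaxP with hcdef
  clear_value c
  have hdivpos : 0 < lamMinQ / lamMaxP := div_pos hlamMinQ_pos hlamMaxP_pos
  have hc0 : 0 ≤ c := by
    have : lamMinQ / lamMaxP ≤ 1 := (div_le_one hlamMaxP_pos).mpr hQP
    rw [hcdef]; linarith
  have hc1 : c ≤ 1 := by rw [hcdef]; linarith
  have main : ∀ j, j ≤ m →
      ebar (N-m+j) ⬝ᵥ P.mulVec (ebar (N-m+j)) ≤ c^j * ρ^2 := by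
    intro j
    induction j with
    | zero =>
      intro _
      simp only [Nat.add_zero, pow_zero, one_mul]
      have h1 : ebar (N-m) ⬝ᵥ P.mulVec (ebar (N-m))
          = (Real.sqrt (ebar (N-m) ⬝ᵥ P.mulVec (ebar (N-m))))^2 :=
        (Real.sq_sqrt (hquad_nn _)).symm
      rw [h1]
      exact pow_le_pow_left₀ (Real.sqrt_nonneg _) hΦbar 2
    | succ j ih =>
      intro hj
      have hjm : j < m := Nat.lt_of_succ_le hj
      have h0 := ih hjm.le
      have hτN : N - m + j < N := by omega
      have hcj1 : c^j ≤ 1 := pow_le_one₀ hc0 hc1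
      have hquad_le : ebar (N-m+j) ⬝ᵥ P.mulVec (ebar (N-m+j)) ≤ ρ^2 := by
        have : c^j * ρ^2 ≤ ρ^2 := mul_le_of_le_one_left (sq_nonneg ρ) hcj1
        linarith
      have hsqrt_le : Real.sqrt (ebar (N-m+j) ⬝ᵥ P.mulVec (ebar (N-m+j))) ≤ εr := by
        calc Real.sqrt (ebar (N-m+j) ⬝ᵥ P.mulVec (ebar (N-m+j)))
            ≤ Real.sqrt (ρ^2) := Real.sqrt_le_sqrt hquad_le
          _ = ρ := Real.sqrt_sq hρ0
          _ ≤ εr := hρεr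
      have hκ' := hκ (ebar (N-m+j)) hsqrt_le
      rw [show N - m + (j+1) = (N - m + j) + 1 by omega,
        hebar₂ (N-m+j) (Nat.le_add_right _ _) hτN]
      have hQl : lamMinQ * ((ebar (N-m+j) : Fin n → ℝ) ⬝ᵥ (ebar (N-m+j) : Fin n → ℝ))
          ≤ ebar (N-m+j) ⬝ᵥ Qstar.mulVec (ebar (N-m+j)) := by
        rw [hlamMinQ]; exact quad_lower' hn hQstar.1 _
      have hPu : ebar (N-m+j) ⬝ᵥ P.mulVec (ebar (N-m+j))
          ≤ lamMaxP * ((ebar (N-m+j) : Fin n → ℝ) ⬝ᵥ (ebar (N-m+j) : Fin n → ℝ)) := by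
        rw [hlamMaxP]; exact quad_upper' hn hP.1 _
      set q := ebar (N-m+j) ⬝ᵥ P.mulVec (ebar (N-m+j)) with hqdef
      set dd := (ebar (N-m+j) : Fin n → ℝ) ⬝ᵥ (ebar (N-m+j) : Fin n → ℝ) with hdddef
      have hdd0 : 0 ≤ dd := hdot_nn _
      have hq0 : 0 ≤ q := hquad_nn _
      clear_value q dd
      have hkey : lamMinQ / lamMaxP * q ≤ lamMinQ * dd := by
        have h1 : lamMinQ / lamMaxP * q ≤ lamMinQ / lamMaxP * (lamMaxP * dd) :=
          mul_le_mul_of_nonneg_left hPu hdivpos.le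
        have h2 : lamMinQ / lamMaxP * (lamMaxP * dd) = lamMinQ * dd := by
          field_simp
        linarith
      have hcontr : q
          - ebar (N-m+j) ⬝ᵥ Qstar.mulVec (ebar (N-m+j)) ≤ c * q := by
        have : q - lamMinQ / lamMaxP * q = c * q := by rw [hcdef]; ring
        linarith [hqdef, hkey, hQl]
      have hfin : c * q ≤ c^(j+1) * ρ^2 := by
        have h1 : c * q ≤ c * (c^j * ρ^2) := mul_le_mul_of_nonneg_left h0 hc0
        have h2 : c * (c^j * ρ^2) = c^(j+1) * ρ^2 := by ring
        linarith
      simp only [WithLp.ofLp_add] at hκ' ⊢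
      linarith [hκ', hqdef, hcontr, hfin]
  have hfinal := main m le_rfl
  rw [hNm] at hfinal
  have hρ_eq : c^m * ρ^2 ≤ ε^2 := by
    linarith [hΥ]
  linarith
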